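/- For each fixed i with 0 ≤ i ≤ d, the number f_i^{Δ^{(k)}} of i-simplices of the k-fold barycentric subdivision of a d-dimensional abstract simplicial complex Δ can be written as f_i^{Δ^{(k)}} = Σ_{j=0}^{d-i} C_{j,i} · ((d+1-j)!)^k for rational constants C_{j,i}, with leading constant C_{0,i} = f_d^Δ · F_{i,d}; in particular f_i^{Δ^{(k)}} = f_d^Δ F_{i,d} (d+1)!^k + O(d!^k) as k → ∞. -/

import Mathlib

open Polynomial

/-- Stirling numbers of the second kind. -/
def stirling2 : ℕ → ℕ → ℕ
  | 0, 0 => 1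
  | 0, _ + 1 => 0
  | _ + 1, 0 => 0
  | n + 1, k + 1 => (k + 1) * stirling2 n (k + 1) + stirling2 n k

/-- `fnum (i+1) (j+1) = f_{i,j} = (i+1)! S(j+1, i+1)`. -/
def fnum (a b : ℕ) : ℕ := a.factorial * stirling2 b a

/-- `FratAux d m = F_{d-m, d}`, via the downward recurrence
`F_{i,d} = (1/((d+1)! - (i+1)!)) Σ_{j=i+1}^{d} f_{i,j} F_{j,d}`, `F_{d,d} = 1`, `F_{-1,d} = 0`. -/
def FratAux (d : ℕ) : ℕ → ℚ
  | 0 => 1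
  | m + 1 =>
    if d ≤ m then 0
    else (1 / (((d + 1).factorial : ℚ) - ((d - m).factorial : ℚ))) *
      ∑ k ∈ (Finset.range (m + 1)).attach,
        (fnum (d - m) (d - k.1 + 1) : ℚ) * FratAux d k.1
  decreasing_by
    have := k.2; simp only [Finset.mem_range] at this; omega

/-- `Frat d t = F_{t-1, d}`. -/
def Frat (d t : ℕ) : ℚ := FratAux d (d + 1 - t)

/-- An iterated vertex type: `Tower V k` is the vertex type of the `k`-fold
barycentric subdivision of a complex with vertices in `V`. -/
def Tower (V : Type) : ℕ → Type
  | 0 => V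
  | k + 1 => Finset (Tower V k)

instance towerDecEq (V : Type) [DecidableEq V] : ∀ k, DecidableEq (Tower V k)
  | 0 => inferInstanceAs (DecidableEq V)
  | k + 1 => letI := towerDecEq V k; inferInstanceAs (DecidableEq (Finset (Tower V k)))

/-- The barycentric subdivision of a finite abstract simplicial complex
(given as a finite family of finite simplices, containing `∅`): its simplices are the
chains of nonempty simplices of `Δ`, together with `∅`. -/
def bary {W : Type} [DecidableEq W] (Δ : Finset (Finset W)) : Finset (Finset (Finset W)) :=
  Δ.powerset.filter fun c =>
    (∅ : Finset W) ∉ c ∧ ∀ σ ∈ c, ∀ τ ∈ c, σ ⊆ τ ∨ τ ⊆ σ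

/-- The `k`-fold iterated barycentric subdivision. -/
def iterBary {V : Type} [DecidableEq V] (Δ : Finset (Finset V)) :
    (k : ℕ) → Finset (Finset (Tower V k))
  | 0 => Δ
  | k + 1 => bary (iterBary Δ k)

/-- `fcount Δ i` is the number of `i`-simplices (simplices with `i+1` vertices) of `Δ`. -/
def fcount {W : Type} [DecidableEq W] (Δ : Finset (Finset W)) (i : ℕ) : ℕ :=
  (Δ.filter fun σ => σ.card = i + 1).card

lemma stirling2_of_lt : ∀ {n k : ℕ}, n < k → stirling2 n k = 0
  | 0, k+1, _ => rfl
  | n+1, k+1, h => by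
      show (k+1) * stirling2 n (k+1) + stirling2 n k = 0
      rw [stirling2_of_lt (by omega), stirling2_of_lt (by omega)]; ring

lemma stirling2_self (n : ℕ) : stirling2 n n = 1 := by
  induction n with
  | zero => rfl
  | succ n ih => cases n with
    | zero => rfl
    | succ m => show (m+1+1) * stirling2 (m+1) (m+1+1) + stirling2 (m+1) (m+1) = 1
                rw [ih, stirling2_of_lt (by omega)]; ring

lemma stirling2_one (n : ℕ) (h : 1 ≤ n) : stirling2 n 1 = 1 := by
  induction n with
  | zero => omega
  | succ n ih => cases n with
    | zero => rfl
    | succ m => show 1 * stirling2 (m+1) 1 + stirling2 (m+1) 0 = 1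
                rw [ih (by omega)]
                show 1 * 1 + 0 = 1; rfl

lemma stirling2_zero_right (n : ℕ) (h : 1 ≤ n) : stirling2 n 0 = 0 := by
  cases n with | zero => omega | succ m => rfl

lemma fnum_self (i : ℕ) : fnum i i = i.factorial := by
  simp [fnum, stirling2_self]

lemma fnum_of_lt {a b : ℕ} (h : b < a) : fnum a b = 0 := by
  simp [fnum, stirling2_of_lt h]

lemma fnum_zero_right (t : ℕ) (h : 1 ≤ t) : fnum t 0 = 0 := by
  have : stirling2 0 t = 0 := by cases t with | zero => omega | succ m => rfl
  simp [fnum, this]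

lemma fnum_succ (t m : ℕ) : fnum (t+1) (m+1) = (t+1) * fnum (t+1) m + (t+1) * fnum t m := by
  show (t+1).factorial * stirling2 (m+1) (t+1) = _
  show (t+1).factorial * ((t+1) * stirling2 m (t+1) + stirling2 m t) = _
  rw [fnum, fnum, Nat.factorial_succ]
  ring

lemma identA (n : ℕ) : ∀ t : ℕ, ∑ m ∈ Finset.range n, n.choose m * fnum t m = fnum (t+1) n := by
  induction n with
  | zero =>
    intro t
    have : stirling2 0 (t+1) = 0 := rfl
    simp [fnum, this]
  | succ n ih =>
    intro t
    cases t with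
    | zero =>
      rw [Finset.sum_range_succ']
      have h1 : ∀ m, fnum 0 (m+1) = 0 := by
        intro m; simp [fnum, stirling2_zero_right (m+1) (by omega)]
      simp only [h1, Nat.mul_zero, Finset.sum_const_zero, Nat.zero_add]
      have h2 : fnum 0 0 = 1 := rfl
      simp [fnum, h2, Nat.choose_zero_right, stirling2_one (n+1) (by omega), show stirling2 0 0 = 1 from rfl]
    | succ t =>
      rw [Finset.sum_range_succ']
      have expand : ∀ m, (n+1).choose (m+1) * fnum (t+1) (m+1)
          = n.choose m * fnum (t+1) (m+1) + n.choose (m+1) * fnum (t+1) (m+1) := by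
        intro m; rw [Nat.choose_succ_succ]; ring
      simp only [expand]
      rw [Finset.sum_add_distrib]
      have reasm : ∑ m ∈ Finset.range n, n.choose (m+1) * fnum (t+1) (m+1)
            + (n+1).choose 0 * fnum (t+1) 0
          = ∑ m ∈ Finset.range (n+1), n.choose m * fnum (t+1) m := by
        rw [Finset.sum_range_succ']; simp
      rw [add_assoc, reasm, Finset.sum_range_succ, ih, Nat.choose_self, one_mul]
      simp only [fnum_succ t]
      have e1 : ∑ m ∈ Finset.range n, n.choose m * ((t+1) * fnum (t+1) m + (t+1) * fnum t m)
          = (t+1) * (∑ m ∈ Finset.range n, n.choose m * fnum (t+1) m)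
            + (t+1) * (∑ m ∈ Finset.range n, n.choose m * fnum t m) := by
        rw [Finset.mul_sum, Finset.mul_sum, ← Finset.sum_add_distrib]
        exact Finset.sum_congr rfl fun m _ => by ring
      rw [e1, ih, ih, fnum_succ (t+1) n]
      ring
section Chains
variable {W : Type} [DecidableEq W]

/-- Chains of nonempty subsets of `σ` with top element `σ` and `t` elements. -/
def chainsTop (σ : Finset W) (t : ℕ) : Finset (Finset (Finset W)) :=
  σ.powerset.powerset.filter fun c =>
    σ ∈ c ∧ (∅ : Finset W) ∉ c ∧ (∀ x ∈ c, ∀ y ∈ c, x ⊆ y ∨ y ⊆ x) ∧ c.card = t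

lemma mem_chainsTop {σ : Finset W} {t : ℕ} {c : Finset (Finset W)} :
    c ∈ chainsTop σ t ↔ (∀ x ∈ c, x ⊆ σ) ∧ σ ∈ c ∧ (∅ : Finset W) ∉ c ∧
      (∀ x ∈ c, ∀ y ∈ c, x ⊆ y ∨ y ⊆ x) ∧ c.card = t := by
  simp only [chainsTop, Finset.mem_filter, Finset.mem_powerset, and_congr_left_iff]
  intro _
  constructor
  · intro h x hx; exact Finset.mem_powerset.1 (h hx)
  · intro h x hx; exact Finset.mem_powerset.2 (h x hx)

/-- A nonempty finite chain of finsets has a maximum. -/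
lemma chain_exists_top {c : Finset (Finset W)} (hne : c.Nonempty)
    (hch : ∀ x ∈ c, ∀ y ∈ c, x ⊆ y ∨ y ⊆ x) :
    ∃ τ ∈ c, ∀ x ∈ c, x ⊆ τ := by
  obtain ⟨τ, hτ, hmax⟩ := Finset.exists_max_image c Finset.card hne
  refine ⟨τ, hτ, fun x hx => ?_⟩
  rcases hch x hx τ hτ with h | h
  · exact h
  · rw [Finset.eq_of_subset_of_card_le h (hmax x hx)]

lemma chainsTop_disjoint {σ σ' : Finset W} {t : ℕ} (h : σ ≠ σ') (ht : 1 ≤ t) :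
    Disjoint (chainsTop σ t) (chainsTop σ' t) := by
  rw [Finset.disjoint_left]
  intro c hc hc'
  rw [mem_chainsTop] at hc hc'
  exact h (Finset.Subset.antisymm (hc'.1 σ hc.2.1) (hc.1 σ' hc'.2.1))

lemma card_chainsTop (t : ℕ) : ∀ σ : Finset W, (σ.Nonempty ∨ 1 ≤ t) →
    (chainsTop σ t).card = fnum t σ.card := by
  induction t with
  | zero =>
    intro σ h
    have hσ : σ.Nonempty := h.resolve_right (by omega)
    have : chainsTop σ 0 = ∅ := by
      rw [Finset.eq_empty_iff_forall_notMem]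
      intro c hc
      rw [mem_chainsTop] at hc
      have h0 := Finset.card_eq_zero.1 hc.2.2.2.2
      rw [h0] at hc
      exact (Finset.notMem_empty σ) hc.2.1
    rw [this, Finset.card_empty, fnum,
      stirling2_zero_right σ.card (Finset.card_pos.2 hσ), Nat.mul_zero]
  | succ t ih =>
    intro σ _
    by_cases hσ : σ = ∅
    · subst hσ
      have : chainsTop (∅ : Finset W) (t+1) = ∅ := by
        rw [Finset.eq_empty_iff_forall_notMem]
        intro c hc
        rw [mem_chainsTop] at hc
        exact hc.2.2.1 hc.2.1
      rw [this, Finset.card_empty, Finset.card_empty, fnum_zero_right (t+1) (by omega)]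
    have hσne : σ.Nonempty := Finset.nonempty_iff_ne_empty.2 hσ
    cases t with
    | zero =>
      -- chainsTop σ 1 = {{σ}}
      have : chainsTop σ 1 = {{σ}} := by
        ext c
        rw [mem_chainsTop, Finset.mem_singleton]
        constructor
        · rintro ⟨-, hmem, -, -, hcard⟩
          obtain ⟨x, hx⟩ := Finset.card_eq_one.1 hcard
          subst hx
          have h2 := Finset.mem_singleton.1 hmem
          rw [h2]
        · rintro rfl
          refine ⟨by simp, by simp, ?_, by simp, by simp⟩
          simp only [Finset.mem_singleton]
          intro h'; exact hσ h'.symm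
      rw [this, Finset.card_singleton, fnum, Nat.factorial_one, Nat.one_mul,
        stirling2_one σ.card (Finset.card_pos.2 hσne)]
    | succ t =>
      -- step case: erase the top
      have hstep : (chainsTop σ (t+2)).card
          = ∑ τ ∈ σ.powerset.erase σ, (chainsTop τ (t+1)).card := by
        rw [← Finset.card_biUnion (by
          intro τ hτ τ' hτ' hne
          exact chainsTop_disjoint hne (by omega))]
        apply Finset.card_bij (fun c _ => c.erase σ)
        · -- maps into
          intro c hc
          rw [mem_chainsTop] at hc
          obtain ⟨hsub, hmem, hemp, hch, hcard⟩ := hc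
          have hcard' : (c.erase σ).card = t + 1 := by
            rw [Finset.card_erase_of_mem hmem, hcard]; omega
          have hne : (c.erase σ).Nonempty := by
            rw [← Finset.card_pos, hcard']; omega
          have hch' : ∀ x ∈ c.erase σ, ∀ y ∈ c.erase σ, x ⊆ y ∨ y ⊆ x := fun x hx y hy =>
            hch x (Finset.mem_of_mem_erase hx) y (Finset.mem_of_mem_erase hy)
          obtain ⟨τ, hτmem, hτtop⟩ := chain_exists_top hne hch'
          rw [Finset.mem_biUnion]
          refine ⟨τ, ?_, ?_⟩
          · rw [Finset.mem_erase, Finset.mem_powerset]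
            exact ⟨(Finset.mem_erase.1 hτmem).1, hsub τ (Finset.mem_of_mem_erase hτmem)⟩
          · rw [mem_chainsTop]
            exact ⟨hτtop, hτmem, fun h => hemp (Finset.mem_of_mem_erase h), hch', hcard'⟩
        · -- injective
          intro c hc c' hc' heq
          rw [mem_chainsTop] at hc hc'
          have : insert σ (c.erase σ) = insert σ (c'.erase σ) := by rw [heq]
          rwa [Finset.insert_erase hc.2.1, Finset.insert_erase hc'.2.1] at this
        · -- surjective
          intro c' hc'
          rw [Finset.mem_biUnion] at hc'
          obtain ⟨τ, hτ, hc'⟩ := hc'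
          rw [Finset.mem_erase, Finset.mem_powerset] at hτ
          rw [mem_chainsTop] at hc'
          obtain ⟨hsub', hτmem, hemp', hch', hcard'⟩ := hc'
          have hσnotmem : σ ∉ c' := by
            intro h
            exact hτ.1 (Finset.Subset.antisymm hτ.2 (hsub' σ h))
          refine ⟨insert σ c', ?_, ?_⟩
          · rw [mem_chainsTop]
            refine ⟨?_, Finset.mem_insert_self σ c', ?_, ?_, ?_⟩
            · intro x hx
              rcases Finset.mem_insert.1 hx with h1 | h1
              · rw [h1]
              · exact (hsub' x h1).trans hτ.2
            · rw [Finset.mem_insert]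
              rintro (h | h)
              · exact hσ h.symm
              · exact hemp' h
            · intro x hx y hy
              rcases Finset.mem_insert.1 hx with h1 | h1 <;>
                rcases Finset.mem_insert.1 hy with h2 | h2
              · left; rw [h1, h2]
              · right; rw [h1]; exact (hsub' y h2).trans hτ.2
              · left; rw [h2]; exact (hsub' x h1).trans hτ.2
              · exact hch' x h1 y h2
            · rw [Finset.card_insert_of_notMem hσnotmem, hcard']
          · rw [Finset.erase_insert hσnotmem]
      rw [hstep]
      have hIH : ∀ τ ∈ σ.powerset.erase σ, (chainsTop τ (t+1)).card = fnum (t+1) τ.card :=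
        fun τ _ => ih τ (Or.inr (by omega))
      rw [Finset.sum_congr rfl hIH]
      -- group by cardinality
      have hadd : ∑ τ ∈ σ.powerset, fnum (t+1) τ.card
          = fnum (t+1) σ.card + ∑ τ ∈ σ.powerset.erase σ, fnum (t+1) τ.card :=
        (Finset.add_sum_erase _ _ (Finset.mem_powerset_self σ)).symm
      have hpow : ∑ τ ∈ σ.powerset, fnum (t+1) τ.card
          = ∑ m ∈ Finset.range (σ.card + 1), σ.card.choose m * fnum (t+1) m := by
        rw [Finset.sum_powerset_apply_card]
        exact Finset.sum_congr rfl fun m _ => by rw [smul_eq_mul]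
      have : ∑ τ ∈ σ.powerset.erase σ, fnum (t+1) τ.card
          = ∑ m ∈ Finset.range σ.card, σ.card.choose m * fnum (t+1) m := by
        have h2 := hadd.symm.trans hpow
        rw [Finset.sum_range_succ, Nat.choose_self, Nat.one_mul] at h2
        omega
      rw [this, identA]

end Chains
section Bary
variable {W : Type} [DecidableEq W]

lemma mem_bary {Δ : Finset (Finset W)} {c : Finset (Finset W)} :
    c ∈ bary Δ ↔ c ⊆ Δ ∧ (∅ : Finset W) ∉ c ∧ ∀ σ ∈ c, ∀ τ ∈ c, σ ⊆ τ ∨ τ ⊆ σ := by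
  simp only [bary, Finset.mem_filter, Finset.mem_powerset, and_assoc]

lemma bary_closed (Δ : Finset (Finset W)) :
    ∀ c ∈ bary Δ, ∀ c' ⊆ c, c' ∈ bary Δ := by
  intro c hc c' hc'
  rw [mem_bary] at hc ⊢
  exact ⟨hc'.trans hc.1, fun h => hc.2.1 (hc' h),
    fun x hx y hy => hc.2.2 x (hc' hx) y (hc' hy)⟩

lemma bary_dim {Δ : Finset (Finset W)} {d : ℕ} (hdim : ∀ σ ∈ Δ, σ.card ≤ d + 1) :
    ∀ c ∈ bary Δ, c.card ≤ d + 1 := by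
  intro c hc
  rw [mem_bary] at hc
  obtain ⟨hsub, hemp, hch⟩ := hc
  have hinj : Set.InjOn Finset.card (c : Set (Finset W)) := by
    intro x hx y hy hxy
    rcases hch x hx y hy with h | h
    · exact Finset.eq_of_subset_of_card_le h (le_of_eq hxy.symm)
    · exact (Finset.eq_of_subset_of_card_le h (le_of_eq hxy)).symm
  calc c.card = (c.image Finset.card).card := (Finset.card_image_of_injOn hinj).symm
    _ ≤ (Finset.Icc 1 (d+1)).card := by
        apply Finset.card_le_card
        intro n hn
        obtain ⟨x, hx, rfl⟩ := Finset.mem_image.1 hn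
        rw [Finset.mem_Icc]
        constructor
        · rw [Nat.one_le_iff_ne_zero]
          intro h0
          exact hemp (by rwa [Finset.card_eq_zero.1 h0] at hx)
        · exact hdim x (hsub hx)
    _ = d + 1 := by rw [Nat.card_Icc]; omega

lemma fcount_bary (Δ : Finset (Finset W)) (d : ℕ)
    (hclosed : ∀ σ ∈ Δ, ∀ τ ⊆ σ, τ ∈ Δ) (hdim : ∀ σ ∈ Δ, σ.card ≤ d + 1) (i : ℕ) :
    fcount (bary Δ) i = ∑ j ∈ Finset.range (d+1), fnum (i+1) (j+1) * fcount Δ j := by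
  have hpart : (bary Δ).filter (fun c => c.card = i + 1)
      = (Δ.filter (fun σ => σ.Nonempty)).biUnion (fun σ => chainsTop σ (i+1)) := by
    ext c
    rw [Finset.mem_filter, Finset.mem_biUnion]
    constructor
    · rintro ⟨hc, hcard⟩
      rw [mem_bary] at hc
      obtain ⟨hsub, hemp, hch⟩ := hc
      have hne : c.Nonempty := by rw [← Finset.card_pos, hcard]; omega
      obtain ⟨τ, hτmem, hτtop⟩ := chain_exists_top hne hch
      refine ⟨τ, ?_, ?_⟩
      · rw [Finset.mem_filter]
        refine ⟨hsub hτmem, ?_⟩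
        rw [Finset.nonempty_iff_ne_empty]
        intro h; rw [h] at hτmem; exact hemp hτmem
      · rw [mem_chainsTop]
        exact ⟨hτtop, hτmem, hemp, hch, hcard⟩
    · rintro ⟨σ, hσ, hc⟩
      rw [Finset.mem_filter] at hσ
      rw [mem_chainsTop] at hc
      obtain ⟨hsub, hmem, hemp, hch, hcard⟩ := hc
      refine ⟨?_, hcard⟩
      rw [mem_bary]
      exact ⟨fun x hx => hclosed σ hσ.1 x (hsub x hx), hemp, hch⟩
  have hdisj : ∀ σ ∈ Δ.filter (fun σ => σ.Nonempty), ∀ σ' ∈ Δ.filter (fun σ => σ.Nonempty),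
      σ ≠ σ' → Disjoint (chainsTop σ (i+1)) (chainsTop σ' (i+1)) :=
    fun σ _ σ' _ h => chainsTop_disjoint h (by omega)
  have : fcount (bary Δ) i
      = ∑ σ ∈ Δ.filter (fun σ => σ.Nonempty), (chainsTop σ (i+1)).card := by
    rw [fcount, hpart, Finset.card_biUnion hdisj]
  rw [this]
  have hval : ∀ σ ∈ Δ.filter (fun σ => σ.Nonempty),
      (chainsTop σ (i+1)).card = fnum (i+1) σ.card := by
    intro σ hσ
    exact card_chainsTop (i+1) σ (Or.inl (Finset.mem_filter.1 hσ).2)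
  rw [Finset.sum_congr rfl hval]
  -- group by cardinality
  rw [← Finset.sum_fiberwise_of_maps_to (g := Finset.card) (t := Finset.range (d+2))
    (fun σ hσ => Finset.mem_range.2 (by
      have := hdim σ (Finset.mem_filter.1 hσ).1; omega))]
  rw [Finset.sum_range_succ']
  have hzero : ∑ σ ∈ (Δ.filter fun σ => σ.Nonempty).filter (fun σ => σ.card = 0),
      fnum (i+1) σ.card = 0 := by
    apply Finset.sum_eq_zero
    intro σ hσ
    rw [Finset.mem_filter, Finset.mem_filter] at hσ
    exact absurd (Finset.card_eq_zero.1 hσ.2) (Finset.nonempty_iff_ne_empty.1 hσ.1.2)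
  rw [hzero, Nat.add_zero]
  apply Finset.sum_congr rfl
  intro j _
  have hfil : (Δ.filter fun σ => σ.Nonempty).filter (fun σ => σ.card = j + 1)
      = Δ.filter fun σ => σ.card = j + 1 := by
    rw [Finset.filter_filter]
    apply Finset.filter_congr
    intro σ _
    simp only [and_iff_right_iff_imp]
    intro h
    rw [← Finset.card_pos, h]; omega
  rw [hfil]
  rw [Finset.sum_congr rfl (fun σ hσ => by rw [(Finset.mem_filter.1 hσ).2])]
  rw [Finset.sum_const, smul_eq_mul, fcount, Nat.mul_comm]

end Bary
/-- Solving the linear recurrence `g (k+1) = a * g k + ∑ b m * lam m ^ k`. -/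
lemma solveRec (n : ℕ) (a : ℚ) (lam b : ℕ → ℚ) (g : ℕ → ℚ)
    (hne : ∀ m, m < n → lam m ≠ a)
    (hrec : ∀ k, g (k+1) = a * g k + ∑ m ∈ Finset.range n, b m * lam m ^ k) :
    ∃ c : ℕ → ℚ, (∀ m, m < n → c m = b m / (lam m - a)) ∧
      ∀ k, g k = (∑ m ∈ Finset.range n, c m * lam m ^ k) + c n * a ^ k := by
  set c : ℕ → ℚ := fun m => if m < n then b m / (lam m - a)
    else g 0 - ∑ m' ∈ Finset.range n, b m' / (lam m' - a) with hc
  refine ⟨c, fun m hm => by simp only [hc, if_pos hm], ?_⟩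
  have key : ∀ k, g k - (∑ m ∈ Finset.range n, c m * lam m ^ k) = c n * a ^ k := by
    intro k
    induction k with
    | zero =>
      simp only [pow_zero, mul_one]
      have h1 : ∑ m ∈ Finset.range n, c m = ∑ m' ∈ Finset.range n, b m' / (lam m' - a) := by
        apply Finset.sum_congr rfl
        intro m hm
        rw [Finset.mem_range] at hm
        simp only [hc, if_pos hm]
      rw [h1]
      simp only [hc, if_neg (lt_irrefl n)]
    | succ k ih =>
      have hsum : ∑ m ∈ Finset.range n, c m * lam m ^ (k+1)
          = a * (∑ m ∈ Finset.range n, c m * lam m ^ k)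
            + ∑ m ∈ Finset.range n, b m * lam m ^ k := by
        rw [Finset.mul_sum, ← Finset.sum_add_distrib]
        apply Finset.sum_congr rfl
        intro m hm
        rw [Finset.mem_range] at hm
        have hne' : lam m - a ≠ 0 := sub_ne_zero.2 (hne m hm)
        have h1 : c m * (lam m - a) = b m := by
          simp only [hc, if_pos hm]
          field_simp
        have h2 : c m * lam m = a * c m + b m := by
          have := h1; nlinarith [h1]
        calc c m * lam m ^ (k+1) = (c m * lam m) * lam m ^ k := by ring
          _ = (a * c m + b m) * lam m ^ k := by rw [h2]
          _ = a * (c m * lam m ^ k) + b m * lam m ^ k := by ring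
      rw [hrec k, hsum]
      have : g k - ∑ m ∈ Finset.range n, c m * lam m ^ k = c n * a ^ k := ih
      calc a * g k + (∑ m ∈ Finset.range n, b m * lam m ^ k)
            - (a * (∑ m ∈ Finset.range n, c m * lam m ^ k)
              + ∑ m ∈ Finset.range n, b m * lam m ^ k)
          = a * (g k - ∑ m ∈ Finset.range n, c m * lam m ^ k) := by ring
        _ = a * (c n * a ^ k) := by rw [this]
        _ = c n * a ^ (k+1) := by ring
  intro k
  have := key k
  linarith [key k]
section Main
variable {V : Type} [DecidableEq V]

lemma iter_facts (Δ : Finset (Finset V)) (d : ℕ)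
    (hclosed : ∀ σ ∈ Δ, ∀ τ ⊆ σ, τ ∈ Δ) (hdim : ∀ σ ∈ Δ, σ.card ≤ d + 1) (k : ℕ) :
    (∀ σ ∈ iterBary Δ k, ∀ τ ⊆ σ, τ ∈ iterBary Δ k)
      ∧ (∀ σ ∈ iterBary Δ k, σ.card ≤ d + 1) := by
  induction k with
  | zero => exact ⟨hclosed, hdim⟩
  | succ k ih =>
    show (∀ σ ∈ bary (iterBary Δ k), ∀ τ ⊆ σ, τ ∈ bary (iterBary Δ k))
      ∧ (∀ σ ∈ bary (iterBary Δ k), σ.card ≤ d + 1)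
    exact ⟨bary_closed _, bary_dim ih.2⟩

lemma iter_rec (Δ : Finset (Finset V)) (d : ℕ)
    (hclosed : ∀ σ ∈ Δ, ∀ τ ⊆ σ, τ ∈ Δ) (hdim : ∀ σ ∈ Δ, σ.card ≤ d + 1) (k i : ℕ) :
    fcount (iterBary Δ (k+1)) i
      = ∑ j ∈ Finset.range (d+1), fnum (i+1) (j+1) * fcount (iterBary Δ k) j := by
  show fcount (bary (iterBary Δ k)) i = _
  exact fcount_bary _ d (iter_facts Δ d hclosed hdim k).1 (iter_facts Δ d hclosed hdim k).2 i

lemma iter_top (Δ : Finset (Finset V)) (d : ℕ)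
    (hclosed : ∀ σ ∈ Δ, ∀ τ ⊆ σ, τ ∈ Δ) (hdim : ∀ σ ∈ Δ, σ.card ≤ d + 1) (k : ℕ) :
    fcount (iterBary Δ k) d = fcount Δ d * ((d+1).factorial)^k := by
  induction k with
  | zero => simp [iterBary]; rfl
  | succ k ih =>
    rw [iter_rec Δ d hclosed hdim k d, Finset.sum_range_succ]
    have hz : ∀ j ∈ Finset.range d, fnum (d+1) (j+1) * fcount (iterBary Δ k) j = 0 := by
      intro j hj
      rw [Finset.mem_range] at hj
      rw [fnum_of_lt (by omega), Nat.zero_mul]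
    rw [Finset.sum_eq_zero hz, Nat.zero_add, fnum_self (d+1), ih, pow_succ]
    ring

lemma main_key (Δ : Finset (Finset V)) (d : ℕ)
    (hclosed : ∀ σ ∈ Δ, ∀ τ ⊆ σ, τ ∈ Δ) (hdim : ∀ σ ∈ Δ, σ.card ≤ d + 1) :
    ∀ n : ℕ, ∀ i : ℕ, i ≤ d → d - i = n →
    ∃ C : ℕ → ℚ,
      (∀ k : ℕ, ((fcount (iterBary Δ k) i : ℚ))
          = ∑ j ∈ Finset.range (d - i + 1), C j * ((d + 1 - j).factorial : ℚ) ^ k) ∧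
      C 0 = (fcount Δ d : ℚ) * Frat d (i + 1) := by
  intro n
  induction n using Nat.strong_induction_on with
  | _ n ih =>
    intro i hid hn
    rcases Nat.eq_zero_or_pos n with h0 | hpos
    · -- base case i = d
      have hieq : i = d := by omega
      refine ⟨fun _ => (fcount Δ d : ℚ), ?_, ?_⟩
      · intro k
        rw [hieq, show d - d = 0 by omega, Finset.sum_range_one, Nat.sub_zero,
          iter_top Δ d hclosed hdim k]
        push_cast
        ring
      · have h1 : Frat d (d+1) = 1 := by
          rw [Frat, show d + 1 - (d+1) = 0 by omega]
          simp [FratAux]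
        rw [hieq, h1, mul_one]
    · -- step case i < d
      have hlt : i < d := by omega
      have hIH : ∀ j : ℕ, ∃ Cj : ℕ → ℚ, i < j → j ≤ d →
          ((∀ k, ((fcount (iterBary Δ k) j : ℚ))
              = ∑ l ∈ Finset.range (d - j + 1), Cj l * ((d+1-l).factorial : ℚ) ^ k)
            ∧ Cj 0 = (fcount Δ d : ℚ) * Frat d (j+1)) := by
        intro j
        by_cases hj : i < j ∧ j ≤ d
        · obtain ⟨C, h1, h2⟩ := ih (d - j) (by omega) j hj.2 rfl
          exact ⟨C, fun _ _ => ⟨h1, h2⟩⟩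
        · exact ⟨fun _ => 0, fun h1 h2 => absurd ⟨h1, h2⟩ hj⟩
      choose Cf hCf using hIH
      set C' : ℕ → ℕ → ℚ := fun j l => if l ≤ d - j then Cf j l else 0 with hC'
      have hfc : ∀ j, i < j → j ≤ d → ∀ k, ((fcount (iterBary Δ k) j : ℚ))
          = ∑ l ∈ Finset.range (d - i), C' j l * ((d+1-l).factorial : ℚ)^k := by
        intro j h1 h2 k
        rw [((hCf j) h1 h2).1 k]
        have hs1 : ∑ l ∈ Finset.range (d - j + 1), Cf j l * ((d+1-l).factorial : ℚ)^k
            = ∑ l ∈ Finset.range (d - j + 1), C' j l * ((d+1-l).factorial : ℚ)^k := by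
          apply Finset.sum_congr rfl
          intro l hl
          rw [Finset.mem_range] at hl
          rw [hC']
          simp only [if_pos (show l ≤ d - j by omega)]
        rw [hs1]
        apply Finset.sum_subset (Finset.range_subset_range.2 (show d - j + 1 ≤ d - i by omega))
        intro l _ hl
        rw [Finset.mem_range] at hl
        rw [hC']
        simp only [if_neg (show ¬ l ≤ d - j by omega), zero_mul]
      have grec : ∀ k, ((fcount (iterBary Δ (k+1)) i : ℚ))
          = ((i+1).factorial : ℚ) * ((fcount (iterBary Δ k) i : ℚ))
            + ∑ l ∈ Finset.range (d - i),
              (∑ j ∈ Finset.Ico (i+1) (d+1), (fnum (i+1) (j+1) : ℚ) * C' j l)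
                * ((d+1-l).factorial : ℚ)^k := by
        intro k
        have h0 := iter_rec Δ d hclosed hdim k i
        have h1 : ((fcount (iterBary Δ (k+1)) i : ℚ))
            = ∑ j ∈ Finset.range (d+1),
                (fnum (i+1) (j+1) : ℚ) * ((fcount (iterBary Δ k) j : ℚ)) := by
          rw [h0]; push_cast; ring
        have hsplit : ∑ j ∈ Finset.range (d+1),
              (fnum (i+1) (j+1) : ℚ) * ((fcount (iterBary Δ k) j : ℚ))
            = (∑ j ∈ Finset.range (i+1),
                (fnum (i+1) (j+1) : ℚ) * ((fcount (iterBary Δ k) j : ℚ)))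
              + ∑ j ∈ Finset.Ico (i+1) (d+1),
                (fnum (i+1) (j+1) : ℚ) * ((fcount (iterBary Δ k) j : ℚ)) := by
          rw [Finset.range_eq_Ico, Finset.range_eq_Ico]
          exact (Finset.sum_Ico_consecutive _ (Nat.zero_le (i+1))
            (show i+1 ≤ d+1 by omega)).symm
        rw [h1, hsplit]
        congr 1
        · rw [Finset.sum_range_succ]
          have hz : ∀ j ∈ Finset.range i,
              (fnum (i+1) (j+1) : ℚ) * ((fcount (iterBary Δ k) j : ℚ)) = 0 := by
            intro j hj
            rw [Finset.mem_range] at hj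
            rw [fnum_of_lt (show j+1 < i+1 by omega)]
            push_cast
            ring
          rw [Finset.sum_eq_zero hz, zero_add, fnum_self (i+1)]
        · have hmid : ∑ j ∈ Finset.Ico (i+1) (d+1),
                (fnum (i+1) (j+1) : ℚ) * ((fcount (iterBary Δ k) j : ℚ))
              = ∑ j ∈ Finset.Ico (i+1) (d+1), ∑ l ∈ Finset.range (d - i),
                  (fnum (i+1) (j+1) : ℚ) * (C' j l * ((d+1-l).factorial : ℚ)^k) := by
            apply Finset.sum_congr rfl
            intro j hj
            rw [Finset.mem_Ico] at hj
            rw [hfc j (by omega) (by omega) k, Finset.mul_sum]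
          rw [hmid, Finset.sum_comm]
          apply Finset.sum_congr rfl
          intro l _
          rw [Finset.sum_mul]
          apply Finset.sum_congr rfl
          intro j _
          ring
      -- apply the recurrence solver
      obtain ⟨c, hc1, hc2⟩ := solveRec (d - i) ((i+1).factorial : ℚ)
        (fun l => ((d+1-l).factorial : ℚ))
        (fun l => ∑ j ∈ Finset.Ico (i+1) (d+1), (fnum (i+1) (j+1) : ℚ) * C' j l)
        (fun k => ((fcount (iterBary Δ k) i : ℚ)))
        (by
          intro l hl
          have h2 : (i+1).factorial < (d+1-l).factorial :=
            (Nat.factorial_lt (by omega)).2 (by omega)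
          show ((d+1-l).factorial : ℚ) ≠ ((i+1).factorial : ℚ)
          exact_mod_cast Nat.ne_of_gt h2)
        grec
      refine ⟨c, ?_, ?_⟩
      · intro k
        rw [hc2 k, show d - i + 1 = (d-i) + 1 by omega, Finset.sum_range_succ,
          show d + 1 - (d - i) = i + 1 by omega]
      · rw [hc1 0 (by omega)]
        -- identify with Frat
        have hXne : ((d+1).factorial : ℚ) - ((i+1).factorial : ℚ) ≠ 0 := by
          have : (i+1).factorial < (d+1).factorial :=
            (Nat.factorial_lt (by omega)).2 (by omega)
          have h2 : ((i+1).factorial : ℚ) < ((d+1).factorial : ℚ) := by exact_mod_cast this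
          intro h; rw [sub_eq_zero] at h; rw [h] at h2; exact lt_irrefl _ h2
        have hb0 : (∑ j ∈ Finset.Ico (i+1) (d+1), (fnum (i+1) (j+1) : ℚ) * C' j 0)
            = (fcount Δ d : ℚ)
              * ∑ j ∈ Finset.Ico (i+1) (d+1), (fnum (i+1) (j+1) : ℚ) * Frat d (j+1) := by
          rw [Finset.mul_sum]
          apply Finset.sum_congr rfl
          intro j hj
          rw [Finset.mem_Ico] at hj
          rw [hC']
          simp only [if_pos (Nat.zero_le (d - j))]
          rw [((hCf j) (by omega) (by omega)).2]
          ring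
        have hFrat : Frat d (i+1) * (((d+1).factorial : ℚ) - ((i+1).factorial : ℚ))
            = ∑ j ∈ Finset.Ico (i+1) (d+1), (fnum (i+1) (j+1) : ℚ) * Frat d (j+1) := by
          rw [Frat, show d + 1 - (i+1) = (d-i-1)+1 by omega, FratAux,
            if_neg (show ¬ d ≤ d-i-1 by omega), show d - (d - i - 1) = i + 1 by omega]
          rw [Finset.sum_attach _ (fun x => (fnum (i+1) (d - x + 1) : ℚ) * FratAux d x)]
          have hre : ∑ x ∈ Finset.range (d-i-1+1), (fnum (i+1) (d - x + 1) : ℚ) * FratAux d x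
              = ∑ j ∈ Finset.Ico (i+1) (d+1), (fnum (i+1) (j+1) : ℚ) * Frat d (j+1) := by
            apply Finset.sum_nbij' (i := fun x => d - x) (j := fun j => d - j)
            · intro x hx; rw [Finset.mem_range] at hx; rw [Finset.mem_Ico]; omega
            · intro j hj; rw [Finset.mem_Ico] at hj; rw [Finset.mem_range]; omega
            · intro x hx; rw [Finset.mem_range] at hx; omega
            · intro j hj; rw [Finset.mem_Ico] at hj; omega
            · intro x hx
              rw [Finset.mem_range] at hx
              rw [show d - x + 1 = (d - x) + 1 from rfl]
              congr 1
              rw [Frat, show d + 1 - (d - x + 1) = x by omega]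
          rw [hre]
          field_simp
        rw [hb0, show ((d+1-0).factorial : ℚ) = ((d+1).factorial : ℚ) by norm_num,
          ← hFrat]
        field_simp
end Main

/-- For a `d`-dimensional abstract simplicial complex `Δ` and `0 ≤ i ≤ d`,
`f_i^{Δ^{(k)}} = Σ_{j=0}^{d-i} C_{j,i} ((d+1-j)!)^k` with rational constants `C_{j,i}`,
`C_{0,i} = f_d^Δ · F_{i,d}`; in particular
`f_i^{Δ^{(k)}} = f_d^Δ F_{i,d} (d+1)!^k + O(d!^k)` as `k → ∞`. -/
theorem stmt15 {V : Type} [DecidableEq V] (Δ : Finset (Finset V)) (d : ℕ)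
    (hclosed : ∀ σ ∈ Δ, ∀ τ ⊆ σ, τ ∈ Δ)
    (hdim : ∀ σ ∈ Δ, σ.card ≤ d + 1) (htop : ∃ σ ∈ Δ, σ.card = d + 1)
    (i : ℕ) (hi : i ≤ d) :
    ∃ C : ℕ → ℚ,
      (∀ k : ℕ, ((fcount (iterBary Δ k) i : ℚ))
          = ∑ j ∈ Finset.range (d - i + 1), C j * ((d + 1 - j).factorial : ℚ) ^ k) ∧
      C 0 = (fcount Δ d : ℚ) * Frat d (i + 1) ∧
      ∃ B : ℚ, ∀ k : ℕ,
        |(fcount (iterBary Δ k) i : ℚ)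
            - (fcount Δ d : ℚ) * Frat d (i + 1) * ((d + 1).factorial : ℚ) ^ k|
          ≤ B * ((d.factorial : ℚ)) ^ k := by
  obtain ⟨C, hC1, hC2⟩ := main_key Δ d hclosed hdim (d - i) i hi rfl
  refine ⟨C, hC1, hC2, ⟨∑ j ∈ Finset.range (d - i), |C (j+1)|, ?_⟩⟩
  intro k
  have heq : (fcount (iterBary Δ k) i : ℚ)
      - (fcount Δ d : ℚ) * Frat d (i + 1) * ((d + 1).factorial : ℚ) ^ k
      = ∑ j ∈ Finset.range (d - i), C (j+1) * ((d + 1 - (j+1)).factorial : ℚ) ^ k := by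
    rw [hC1 k, Finset.sum_range_succ', Nat.sub_zero, hC2]
    ring
  rw [heq]
  calc |∑ j ∈ Finset.range (d - i), C (j+1) * ((d + 1 - (j+1)).factorial : ℚ) ^ k|
      ≤ ∑ j ∈ Finset.range (d - i), |C (j+1) * ((d + 1 - (j+1)).factorial : ℚ) ^ k| :=
        Finset.abs_sum_le_sum_abs _ _
    _ ≤ ∑ j ∈ Finset.range (d - i), |C (j+1)| * ((d.factorial : ℚ)) ^ k := by
        apply Finset.sum_le_sum
        intro j _
        rw [abs_mul]
        apply mul_le_mul_of_nonneg_left _ (abs_nonneg _)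
        have h1 : (0:ℚ) ≤ ((d + 1 - (j+1)).factorial : ℚ) ^ k :=
          pow_nonneg (by positivity) k
        rw [abs_of_nonneg h1]
        apply pow_le_pow_left₀ (by positivity)
        exact_mod_cast Nat.factorial_le (show d + 1 - (j+1) ≤ d by omega)
    _ = (∑ j ∈ Finset.range (d - i), |C (j+1)|) * ((d.factorial : ℚ)) ^ k := by
        rw [Finset.sum_mul]
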